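/- A point y ∈ ℝⁿ is a global minimizer of f (i.e. f(y) ≤ f(z) for all z ∈ ℝⁿ) if and only if ‖y‖² y − D y + b = 0 and ‖y‖² ≥ D₁, where D₁ is the largest diagonal entry of D. -/

import Mathlib

open Matrix

noncomputable def Mmat {n : ℕ} (D b : Fin n → ℝ) :
    Matrix (Fin n ⊕ Fin n ⊕ Unit) (Fin n ⊕ Fin n ⊕ Unit) ℝ :=
  Matrix.of fun i j =>
    match i, j with
    | Sum.inl i, Sum.inl j => if i = j then D i else 0
    | Sum.inl i, Sum.inr (Sum.inl j) => if i = j then -b i else 0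
    | Sum.inl _, Sum.inr (Sum.inr _) => 0
    | Sum.inr (Sum.inl _), Sum.inl _ => 0
    | Sum.inr (Sum.inl i), Sum.inr (Sum.inl j) => if i = j then D i else 0
    | Sum.inr (Sum.inl i), Sum.inr (Sum.inr _) => -b i
    | Sum.inr (Sum.inr _), Sum.inl _ => 1
    | Sum.inr (Sum.inr _), Sum.inr _ => 0

/-- `f(y) = (1/4)‖y‖⁴ − (1/2) yᵀ D y + bᵀ y`. -/
noncomputable def fD {n : ℕ} (D b : Fin n → ℝ) (y : Fin n → ℝ) : ℝ :=
  (1/4) * (y ⬝ᵥ y)^2 - (1/2) * (y ⬝ᵥ (Matrix.diagonal D *ᵥ y)) + b ⬝ᵥ y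

lemma dsym {n : ℕ} (D : Fin n → ℝ) (u v : Fin n → ℝ) :
    u ⬝ᵥ (Matrix.diagonal D *ᵥ v) = v ⬝ᵥ (Matrix.diagonal D *ᵥ u) := by
  simp only [dotProduct, Matrix.mulVec_diagonal]
  exact Finset.sum_congr rfl fun i _ => by ring

lemma key {n : ℕ} (D b y w : Fin n → ℝ)
    (hb : b = Matrix.diagonal D *ᵥ y - (y ⬝ᵥ y) • y) :
    fD D b (y + w) = fD D b y + (y ⬝ᵥ w + (w ⬝ᵥ w)/2)^2
      + (1/2) * ((y ⬝ᵥ y) * (w ⬝ᵥ w) - w ⬝ᵥ (Matrix.diagonal D *ᵥ w)) := by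
  subst hb
  simp only [fD, Matrix.mulVec_add, dotProduct_add, add_dotProduct, sub_dotProduct,
    dotProduct_sub, smul_dotProduct, dotProduct_smul, smul_eq_mul, dsym D w y,
    dotProduct_comm w y, dotProduct_comm (Matrix.diagonal D *ᵥ y)]
  ring

lemma expandfD {n : ℕ} (D b y v : Fin n → ℝ) (t : ℝ) :
    fD D b (y + t • v) = fD D b y
      + (((y ⬝ᵥ y) • y - Matrix.diagonal D *ᵥ y + b) ⬝ᵥ v) * t
      + ((y ⬝ᵥ v)^2 + (y ⬝ᵥ y)*(v ⬝ᵥ v)/2 - (v ⬝ᵥ (Matrix.diagonal D *ᵥ v))/2) * t^2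
      + ((y ⬝ᵥ v)*(v ⬝ᵥ v)) * t^3 + ((v ⬝ᵥ v)^2/4) * t^4 := by
  simp only [fD, Matrix.mulVec_add, Matrix.mulVec_smul, dotProduct_add, add_dotProduct,
    sub_dotProduct, dotProduct_sub, smul_dotProduct, dotProduct_smul, smul_eq_mul,
    dsym D v y, dotProduct_comm v y, dotProduct_comm (Matrix.diagonal D *ᵥ y),
    dotProduct_comm (Matrix.diagonal D *ᵥ v)]
  ring

lemma sumform {n : ℕ} (D : Fin n → ℝ) (a : ℝ) (w : Fin n → ℝ) :
    a * (w ⬝ᵥ w) - w ⬝ᵥ (Matrix.diagonal D *ᵥ w)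
      = ∑ i, (a - D i) * (w i)^2 := by
  simp only [dotProduct, Matrix.mulVec_diagonal, Finset.mul_sum, ← Finset.sum_sub_distrib]
  exact Finset.sum_congr rfl fun i _ => by ring

lemma coeff_zero (a A B C : ℝ)
    (h : ∀ t : ℝ, 0 ≤ a * t + (A * t^2 + (B * t^3 + C * t^4))) : a = 0 := by
  set p : ℝ → ℝ := fun t => a * t + (A * t^2 + (B * t^3 + C * t^4)) with hp
  have hmin : IsLocalMin p 0 := by
    apply Filter.Eventually.of_forall
    intro t
    simpa [hp] using h t
  have hd : HasDerivAt p a 0 := by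
    have h1 := ((hasDerivAt_id (0:ℝ)).const_mul a).add
      ((((hasDerivAt_pow 2 (0:ℝ)).const_mul A)).add
        ((((hasDerivAt_pow 3 (0:ℝ)).const_mul B)).add
          (((hasDerivAt_pow 4 (0:ℝ)).const_mul C))))
    rw [hp]
    exact h1.congr_deriv (by simp)
  have := hmin.deriv_eq_zero
  rwa [hd.deriv] at this

theorem stmt5 {n : ℕ} (hn : 0 < n) (D b : Fin n → ℝ) (hD : Antitone D)
    (y : Fin n → ℝ) :
    (∀ z : Fin n → ℝ, fD D b y ≤ fD D b z) ↔
      ((y ⬝ᵥ y) • y - Matrix.diagonal D *ᵥ y + b = 0 ∧ D ⟨0, hn⟩ ≤ y ⬝ᵥ y) := by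
  set i0 : Fin n := ⟨0, hn⟩ with hi0
  constructor
  · intro hmin
    have hstat : (y ⬝ᵥ y) • y - Matrix.diagonal D *ᵥ y + b = 0 := by
      set g : Fin n → ℝ := (y ⬝ᵥ y) • y - Matrix.diagonal D *ᵥ y + b with hg
      have h0 : g ⬝ᵥ g = 0 := by
        apply coeff_zero _ ((y ⬝ᵥ g)^2 + (y ⬝ᵥ y)*(g ⬝ᵥ g)/2 - (g ⬝ᵥ (Matrix.diagonal D *ᵥ g))/2)
          ((y ⬝ᵥ g)*(g ⬝ᵥ g)) ((g ⬝ᵥ g)^2/4)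
        intro t
        have h1 := hmin (y + t • g)
        rw [expandfD D b y g t] at h1
        rw [← hg] at h1
        linarith
      exact dotProduct_self_eq_zero.mp h0
    refine ⟨hstat, ?_⟩
    by_contra hcon
    push_neg at hcon
    have hb : b = Matrix.diagonal D *ᵥ y - (y ⬝ᵥ y) • y := by
      funext i
      have := congrFun hstat i
      simp only [Pi.add_apply, Pi.sub_apply, Pi.smul_apply, smul_eq_mul, Pi.zero_apply,
        Pi.sub_apply] at this ⊢
      linarith
    set s := Real.sqrt (D i0 - y ⬝ᵥ y) with hs
    have hspos : 0 < s := Real.sqrt_pos.mpr (by linarith)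
    have hs2 : s^2 = D i0 - y ⬝ᵥ y := Real.sq_sqrt (by linarith)
    have claim : ∀ t : ℝ, fD D b (y + Pi.single i0 t)
        = fD D b y + (y i0 * t + t^2/2)^2 + (1/2) * ((y ⬝ᵥ y - D i0) * t^2) := by
      intro t
      rw [key D b y (Pi.single i0 t) hb, sumform]
      have hd : (Pi.single i0 t : Fin n → ℝ) ⬝ᵥ Pi.single i0 t = t^2 := by
        rw [dotProduct_single]; simp [sq]
      have hyd : y ⬝ᵥ (Pi.single i0 t : Fin n → ℝ) = y i0 * t :=
        dotProduct_single y t i0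
      have hsum : ∑ i, (y ⬝ᵥ y - D i) * ((Pi.single i0 t : Fin n → ℝ) i)^2
          = (y ⬝ᵥ y - D i0) * t^2 := by
        rw [Finset.sum_eq_single i0] <;> simp [Pi.single_apply]
        intro i hi; simp [hi]
      rw [hd, hyd, hsum]
    by_cases hy0 : y i0 = 0
    · have h1 := hmin (y + Pi.single i0 s)
      rw [claim s] at h1
      rw [hy0] at h1
      nlinarith [sq_nonneg s, hspos]
    · have h1 := hmin (y + Pi.single i0 (-2 * y i0))
      rw [claim (-2 * y i0)] at h1
      have hy2 : (0:ℝ) < (y i0)^2 := by positivity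
      nlinarith
  · rintro ⟨hstat, hD1⟩
    intro z
    have hb : b = Matrix.diagonal D *ᵥ y - (y ⬝ᵥ y) • y := by
      funext i
      have := congrFun hstat i
      simp only [Pi.add_apply, Pi.sub_apply, Pi.smul_apply, smul_eq_mul, Pi.zero_apply] at this ⊢
      linarith
    have hz : z = y + (z - y) := by ring_nf
    rw [hz, key D b y (z - y) hb, sumform]
    have hsum : 0 ≤ ∑ i, (y ⬝ᵥ y - D i) * ((z - y) i)^2 := by
      apply Finset.sum_nonneg
      intro i _
      apply mul_nonneg
      · have : D i ≤ D i0 := hD (by simp [hi0, Fin.le_def])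
        linarith
      · positivity
    nlinarith [sq_nonneg (y ⬝ᵥ (z - y) + ((z - y) ⬝ᵥ (z - y))/2)]
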